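/- Let T be a bounded linear operator on a complex Hilbert space H and r ≥ 1. Then sup over unit vectors x of |⟨|T||T*|x,x⟩|^r is at most (1/2)‖|T|^{2r} + |T*|^{2r}‖. -/

import Mathlib

set_option synthInstance.maxHeartbeats 1000000
set_option maxHeartbeats 1000000
set_option linter.unusedSectionVars false

open scoped InnerProductSpace NNReal

section Aux

variable {H : Type*} [NormedAddCommGroup H] [InnerProductSpace ℂ H] [CompleteSpace H]


private lemma re_inner_smul' (c : ℝ) (v w : H) :
    RCLike.re ⟪(c • v : H), w⟫_ℂ = c * RCLike.re ⟪v, w⟫_ℂ := by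
  rw [← algebraMap_smul ℂ c v, Complex.coe_algebraMap, inner_smul_left]
  simp [Complex.conj_ofReal]

private lemma inner_re_mono' {P Q : H →L[ℂ] H} (h : P ≤ Q) (x : H) :
    RCLike.re ⟪P x, x⟫_ℂ ≤ RCLike.re ⟪Q x, x⟫_ℂ := by
  have h0 := ((ContinuousLinearMap.le_def P Q).mp h).re_inner_nonneg_left x
  simp only [ContinuousLinearMap.sub_apply, inner_sub_left, map_sub] at h0
  linarith

private lemma sa_inner_move' {S : H →L[ℂ] H} (hS : IsSelfAdjoint S) (v w : H) :
    ⟪S v, w⟫_ℂ = ⟪v, S w⟫_ℂ := by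
  conv_lhs => rw [← hS.adjoint_eq]
  rw [ContinuousLinearMap.adjoint_inner_left]

private lemma young'' {a t r : ℝ} (ha : 0 < a) (ht : 0 ≤ t) (hr : 1 ≤ r) :
    t * a ^ (r - 1) ≤ r⁻¹ * t ^ r + (1 - r⁻¹) * a ^ r := by
  rcases eq_or_lt_of_le hr with h1 | h1
  · rw [← h1]; simp [Real.rpow_one]
  · have hq : r.HolderConjugate (r / (r - 1)) := Real.HolderConjugate.conjExponent h1
    have h := Real.young_inequality_of_nonneg ht (Real.rpow_nonneg ha.le (r - 1)) hq
    have hrne : r - 1 ≠ 0 := sub_ne_zero.mpr h1.ne'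
    have hr0 : r ≠ 0 := by positivity
    have h2 : (a ^ (r - 1)) ^ (r / (r - 1)) = a ^ r := by
      rw [← Real.rpow_mul ha.le]; congr 1; field_simp
    have h3 : t ^ r / r + a ^ r / (r / (r - 1)) = r⁻¹ * t ^ r + (1 - r⁻¹) * a ^ r := by
      field_simp
    rw [h2, h3] at h
    exact h

private lemma mccarthy' (S : H →L[ℂ] H) (hS : (0 : H →L[ℂ] H) ≤ S) {r : ℝ} (hr : 1 ≤ r)
    {x : H} (hx : ‖x‖ = 1) :
    ‖S x‖ ^ (2 * r) ≤ RCLike.re ⟪(CFC.rpow S (2 * r)) x, x⟫_ℂ := by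
  have hr0 : (0:ℝ) < r := lt_of_lt_of_le one_pos hr
  have h2r : (0:ℝ) < 2 * r := by linarith
  have hpos : 0 ≤ RCLike.re ⟪(CFC.rpow S (2 * r)) x, x⟫_ℂ :=
    ((ContinuousLinearMap.nonneg_iff_isPositive _).mp (CFC.rpow_nonneg : 0 ≤ CFC.rpow S (2 * r))).re_inner_nonneg_left x
  rcases eq_or_lt_of_le (norm_nonneg (S x)) with hz | hz
  · rw [← hz, Real.zero_rpow h2r.ne']
    exact hpos
  have hSsa : IsSelfAdjoint S := ((ContinuousLinearMap.nonneg_iff_isPositive S).mp hS).isSelfAdjoint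
  set a : ℝ≥0 := ‖S x‖₊ ^ 2 with ha_def
  have haR : (a : ℝ) = ‖S x‖ ^ 2 := by simp [ha_def]
  have ha : (0:ℝ) < (a : ℝ) := by rw [haR]; positivity
  set p1 : ℝ≥0 := Real.toNNReal r⁻¹ with hp1_def
  set p2 : ℝ≥0 := Real.toNNReal (1 - r⁻¹) with hp2_def
  have hp1 : (p1 : ℝ) = r⁻¹ := Real.coe_toNNReal _ (by positivity)
  have hp2 : (p2 : ℝ) = 1 - r⁻¹ := Real.coe_toNNReal _ (by
    have : r⁻¹ ≤ 1 := by
      rw [inv_le_one_iff₀]; right; exact hr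
    linarith)
  -- scalar inequality
  have hscalar : ∀ t : ℝ≥0, a ^ (r - 1) * t ^ 2 ≤ p1 * t ^ (2 * r) + p2 * a ^ r := by
    intro t
    rw [← NNReal.coe_le_coe]
    push_cast [hp1, hp2]
    have hy := young'' (a := (a:ℝ)) (t := ((t:ℝ))^2) ha (by positivity) hr
    have ht2 : ((t:ℝ) ^ 2) ^ r = (t:ℝ) ^ (2 * r) := by
      rw [← Real.rpow_natCast (t:ℝ) 2, ← Real.rpow_mul t.coe_nonneg]
      norm_num
    rw [ht2] at hy
    linarith
  -- operator inequality
  have hcont1 : ContinuousOn (fun t : ℝ≥0 => a ^ (r - 1) * t ^ 2) (spectrum ℝ≥0 S) := by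
    fun_prop
  have hcont2 : ContinuousOn (fun t : ℝ≥0 => p1 * t ^ (2 * r) + p2 * a ^ r) (spectrum ℝ≥0 S) :=
    ((continuous_const.mul (NNReal.continuous_rpow_const h2r.le)).add continuous_const).continuousOn
  have hop : cfc (fun t : ℝ≥0 => a ^ (r - 1) * t ^ 2) S ≤
      cfc (fun t : ℝ≥0 => p1 * t ^ (2 * r) + p2 * a ^ r) S :=
    cfc_mono (fun t _ => hscalar t) hcont1 hcont2
  have hlhs : cfc (fun t : ℝ≥0 => a ^ (r - 1) * t ^ 2) S = a ^ (r - 1) • S ^ 2 := by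
    rw [cfc_const_mul _ _ S (by fun_prop), cfc_pow_id S 2]
  have hrhs : cfc (fun t : ℝ≥0 => p1 * t ^ (2 * r) + p2 * a ^ r) S
      = p1 • CFC.rpow S (2 * r) + algebraMap ℝ≥0 (H →L[ℂ] H) (p2 * a ^ r) := by
    rw [cfc_add S (fun t : ℝ≥0 => p1 * t ^ (2 * r)) (fun _ : ℝ≥0 => p2 * a ^ r)
        ((continuous_const.mul (NNReal.continuous_rpow_const h2r.le)).continuousOn) continuousOn_const,
      cfc_const_mul _ _ S ((NNReal.continuous_rpow_const h2r.le).continuousOn),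
      cfc_const _ S]
    rfl
  rw [hlhs, hrhs] at hop
  have hmono := inner_re_mono' hop x
  -- compute both sides
  have e1 : RCLike.re ⟪(a ^ (r - 1) • S ^ 2) x, x⟫_ℂ = (a:ℝ) ^ (r - 1) * ‖S x‖ ^ 2 := by
    rw [NNReal.smul_def, ContinuousLinearMap.smul_apply, re_inner_smul', pow_two,
      ContinuousLinearMap.mul_apply, sa_inner_move' hSsa, inner_self_eq_norm_sq]
    push_cast
    ring
  have e2 : RCLike.re ⟪(p1 • CFC.rpow S (2 * r) + algebraMap ℝ≥0 (H →L[ℂ] H) (p2 * a ^ r)) x,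
      x⟫_ℂ = r⁻¹ * RCLike.re ⟪(CFC.rpow S (2 * r)) x, x⟫_ℂ + (1 - r⁻¹) * (a:ℝ) ^ r := by
    rw [ContinuousLinearMap.add_apply, inner_add_left, map_add]
    congr 1
    · rw [NNReal.smul_def, ContinuousLinearMap.smul_apply, re_inner_smul', hp1]
    · rw [Algebra.algebraMap_eq_smul_one, ContinuousLinearMap.smul_apply,
        ContinuousLinearMap.one_apply, NNReal.smul_def, re_inner_smul', inner_self_eq_norm_sq, hx]
      push_cast [hp2]
      ring
  rw [e1, e2] at hmono
  -- now pure real arithmetic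
  set φ := RCLike.re ⟪(CFC.rpow S (2 * r)) x, x⟫_ℂ
  rw [← haR] at hmono
  have key : (a:ℝ) ^ r ≤ φ := by
    have hmul : (a:ℝ) ^ (r - 1) * (a:ℝ) = (a:ℝ) ^ r := by
      nth_rewrite 2 [← Real.rpow_one (a:ℝ)]
      rw [← Real.rpow_add ha]
      norm_num
    rw [hmul] at hmono
    have : r⁻¹ * (a:ℝ) ^ r ≤ r⁻¹ * φ := by linarith
    have hrinv : (0:ℝ) < r⁻¹ := by positivity
    exact le_of_mul_le_mul_left this hrinv
  have efin : ‖S x‖ ^ (2 * r) = (a:ℝ) ^ r := by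
    rw [haR, ← Real.rpow_natCast ‖S x‖ 2, ← Real.rpow_mul (norm_nonneg _)]
    norm_num
  rw [efin]
  exact key

end Aux

noncomputable def opAbs {H : Type*} [NormedAddCommGroup H] [InnerProductSpace ℂ H]
    [CompleteSpace H] (T : H →L[ℂ] H) : H →L[ℂ] H :=
  CFC.sqrt ((ContinuousLinearMap.adjoint T) * T)

noncomputable def numRadius {H : Type*} [NormedAddCommGroup H] [InnerProductSpace ℂ H]
    (T : H →L[ℂ] H) : ℝ :=
  ⨆ x : {y : H // ‖y‖ = 1}, ‖⟪T (x : H), (x : H)⟫_ℂ‖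


theorem stmt_11 {H : Type*} [NormedAddCommGroup H] [InnerProductSpace ℂ H] [CompleteSpace H]
    (T : H →L[ℂ] H) (r : ℝ) (hr : 1 ≤ r) :
    (⨆ x : {y : H // ‖y‖ = 1},
        ‖⟪(opAbs T) ((opAbs (ContinuousLinearMap.adjoint T)) (x : H)), (x : H)⟫_ℂ‖ ^ r) ≤
      (1 / 2) * ‖CFC.rpow (opAbs T) (2 * r) +
          CFC.rpow (opAbs (ContinuousLinearMap.adjoint T)) (2 * r)‖ := by
  set A := opAbs T with hA_def
  set B := opAbs (ContinuousLinearMap.adjoint T) with hB_def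
  have hA : (0 : H →L[ℂ] H) ≤ A := CFC.sqrt_nonneg _
  have hB : (0 : H →L[ℂ] H) ≤ B := CFC.sqrt_nonneg _
  have hAsa : IsSelfAdjoint A := ((ContinuousLinearMap.nonneg_iff_isPositive A).mp hA).isSelfAdjoint
  have hr0 : (0:ℝ) ≤ r := le_trans zero_le_one hr
  set N := CFC.rpow A (2 * r) + CFC.rpow B (2 * r) with hN_def
  have hRHS0 : (0:ℝ) ≤ 1 / 2 * ‖N‖ := by positivity
  apply Real.iSup_le _ hRHS0
  rintro ⟨v, hv⟩
  have step1 : ‖⟪A (B v), v⟫_ℂ‖ ≤ ‖B v‖ * ‖A v‖ := by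
    rw [sa_inner_move' hAsa (B v) v]
    exact norm_inner_le_norm _ _
  have stepA := mccarthy' A hA hr hv
  have stepB := mccarthy' B hB hr hv
  have rpow2 : ∀ w : H, ‖w‖ ^ (2 * r) = (‖w‖ ^ r) ^ 2 := by
    intro w
    rw [← Real.rpow_natCast (‖w‖ ^ r) 2, ← Real.rpow_mul (norm_nonneg _)]
    norm_num [mul_comm]
  calc ‖⟪A (B v), v⟫_ℂ‖ ^ r
      ≤ (‖B v‖ * ‖A v‖) ^ r := Real.rpow_le_rpow (norm_nonneg _) step1 hr0
    _ = ‖B v‖ ^ r * ‖A v‖ ^ r := Real.mul_rpow (norm_nonneg _) (norm_nonneg _)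
    _ ≤ (‖A v‖ ^ (2 * r) + ‖B v‖ ^ (2 * r)) / 2 := by
        rw [rpow2 (A v), rpow2 (B v)]
        nlinarith [sq_nonneg (‖A v‖ ^ r - ‖B v‖ ^ r),
          Real.rpow_nonneg (norm_nonneg (A v)) r, Real.rpow_nonneg (norm_nonneg (B v)) r]
    _ ≤ (RCLike.re ⟪(CFC.rpow A (2 * r)) v, v⟫_ℂ + RCLike.re ⟪(CFC.rpow B (2 * r)) v, v⟫_ℂ) / 2 := by
        linarith [stepA, stepB]
    _ = RCLike.re ⟪N v, v⟫_ℂ / 2 := by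
        rw [hN_def, ContinuousLinearMap.add_apply, inner_add_left, map_add]
    _ ≤ 1 / 2 * ‖N‖ := by
        have h1 : RCLike.re ⟪N v, v⟫_ℂ ≤ ‖⟪N v, v⟫_ℂ‖ := RCLike.re_le_norm _
        have h2 : ‖⟪N v, v⟫_ℂ‖ ≤ ‖N v‖ * ‖v‖ := norm_inner_le_norm _ _
        have h3 : ‖N v‖ ≤ ‖N‖ * ‖v‖ := N.le_opNorm v
        rw [hv, mul_one] at h2 h3
        linarith
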